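/- Any finitely supported sequence over {0,1,2} satisfying the Chung-Graham conditions with all nonzero digits at even indices ≤ 2m represents an integer strictly less than F_{2m+4}; moreover the value F_{2m+4} - 1 is achieved by a unique such sequence. -/
import Mathlib


/-- The value represented by a finitely supported digit sequence:
    `∑ i, a i * F (i+2)` where `F` is the Fibonacci sequence. -/
def fibVal (a : ℕ →₀ ℕ) : ℕ := a.sum fun i c => c * Nat.fib (i + 2)

/-- Zeckendorf conditions: binary digits with no two consecutive 1's. -/
def IsZeckendorf (a : ℕ →₀ ℕ) : Prop :=
  (∀ i, a i ≤ 1) ∧ (∀ i, a i * a (i + 1) = 0)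

/-- Chung-Graham conditions: digits in {0,1,2}, zero at odd indices, and
    between any two even indices carrying digit 2 there is an even index
    carrying digit 0. -/
def IsChungGraham (a : ℕ →₀ ℕ) : Prop :=
  (∀ i, a i ≤ 2) ∧ (∀ i, Odd i → a i = 0) ∧
  (∀ i j, Even i → Even j → i < j → a i = 2 → a j = 2 →
    ∃ k, Even k ∧ i < k ∧ k < j ∧ a k = 0)

/-- The `cgsplit` rule: digit 0 ↦ (0,0), 1 ↦ (0,1), 2 ↦ (1,1). -/
def IsSplit (a b c : ℕ →₀ ℕ) : Prop :=
  ∀ i, (a i = 0 → b i = 0 ∧ c i = 0) ∧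
       (a i = 1 → b i = 0 ∧ c i = 1) ∧
       (a i = 2 → b i = 1 ∧ c i = 1)

lemma fibVal_add (a b : ℕ →₀ ℕ) : fibVal (a + b) = fibVal a + fibVal b := by
  unfold fibVal
  exact Finsupp.sum_add_index' (fun i => by simp) (fun i c d => add_mul c d _)

lemma fibVal_single (n c : ℕ) : fibVal (Finsupp.single n c) = c * Nat.fib (n+2) := by
  unfold fibVal
  exact Finsupp.sum_single_index (by simp)

noncomputable def maxB : ℕ → (ℕ →₀ ℕ)
  | 0 => Finsupp.single 0 1
  | m+1 => maxB m + Finsupp.single (2*m+2) 1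

noncomputable def maxA (m : ℕ) : ℕ →₀ ℕ := maxB m + Finsupp.single (2*m) 1

lemma maxB_apply (m i : ℕ) : maxB m i = if i % 2 = 0 ∧ i ≤ 2*m then 1 else 0 := by
  induction m with
  | zero =>
    rw [show maxB 0 = Finsupp.single 0 1 from rfl, Finsupp.single_apply]
    split_ifs <;> omega
  | succ m ih =>
    rw [show maxB (m+1) = maxB m + Finsupp.single (2*m+2) 1 from rfl,
      Finsupp.add_apply, ih, Finsupp.single_apply]
    split_ifs <;> omega

lemma maxA_apply (m i : ℕ) :
    maxA m i = (if i % 2 = 0 ∧ i ≤ 2*m then 1 else 0) + (if 2*m = i then 1 else 0) := by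
  rw [maxA, Finsupp.add_apply, maxB_apply, Finsupp.single_apply]

lemma maxB_val (m : ℕ) : fibVal (maxB m) + 1 = Nat.fib (2*m+3) := by
  induction m with
  | zero =>
    rw [show maxB 0 = Finsupp.single 0 1 from rfl, fibVal_single]
    decide
  | succ m ih =>
    rw [show maxB (m+1) = maxB m + Finsupp.single (2*m+2) 1 from rfl, fibVal_add,
      fibVal_single]
    have e1 : Nat.fib (2*(m+1)+3) = Nat.fib (2*m+3) + Nat.fib (2*m+4) := by
      rw [show 2*(m+1)+3 = (2*m+3)+2 by ring, Nat.fib_add_two]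
    have e2 : (2*m+2)+2 = 2*m+4 := by ring
    rw [e2]
    omega

lemma maxA_val (m : ℕ) : fibVal (maxA m) + 1 = Nat.fib (2*m+4) := by
  rw [maxA, fibVal_add, fibVal_single]
  have e1 : Nat.fib (2*m+4) = Nat.fib (2*m+2) + Nat.fib (2*m+3) := by
    rw [show 2*m+4 = (2*m+2)+2 by ring, Nat.fib_add_two]
  have := maxB_val m
  omega

lemma maxA_CG (m : ℕ) : IsChungGraham (maxA m) := by
  refine ⟨fun i => ?_, fun i hi => ?_, fun i j hi hj hij h2i h2j => ?_⟩
  · rw [maxA_apply]; split_ifs <;> omega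
  · rw [Nat.odd_iff] at hi; rw [maxA_apply]; split_ifs <;> omega
  · exfalso
    rw [maxA_apply] at h2i h2j
    split_ifs at h2i h2j <;> omega

lemma maxA_supp (m : ℕ) : ∀ i, 2*m < i → maxA m i = 0 := by
  intro i hi; rw [maxA_apply]; split_ifs <;> omega

lemma key (m : ℕ) :
    (∀ a : ℕ →₀ ℕ, IsChungGraham a → (∀ i, 2*m < i → a i = 0) →
       fibVal a + 1 ≤ Nat.fib (2*m+4) ∧ (fibVal a + 1 = Nat.fib (2*m+4) → a = maxA m)) ∧
    (∀ a : ℕ →₀ ℕ, IsChungGraham a → (∀ i, 2*m < i → a i = 0) →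
       (∀ i, i ≤ 2*m → a i = 2 → ∃ k, k % 2 = 0 ∧ i < k ∧ k ≤ 2*m ∧ a k = 0) →
       fibVal a + 1 ≤ Nat.fib (2*m+3) ∧ (fibVal a + 1 = Nat.fib (2*m+3) → a = maxB m)) := by
  induction m with
  | zero =>
    have base : ∀ a : ℕ →₀ ℕ, (∀ i, 0 < i → a i = 0) →
        a = Finsupp.single 0 (a 0) ∧ fibVal a = a 0 := by
      intro a hsup
      have ha : a = Finsupp.single 0 (a 0) := by
        ext i
        rcases Nat.eq_zero_or_pos i with h | h
        · subst h; simp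
        · rw [Finsupp.single_eq_of_ne (by omega), hsup i h]
      refine ⟨ha, ?_⟩
      conv_lhs => rw [ha]
      rw [fibVal_single]
      simp
    constructor
    · intro a hCG hsup
      obtain ⟨ha, hv⟩ := base a (fun i hi => hsup i (by omega))
      have h2 : a 0 ≤ 2 := hCG.1 0
      have hf : Nat.fib (2*0+4) = 3 := by decide
      constructor
      · rw [hv]; omega
      · intro he
        rw [hv] at he
        have : a 0 = 2 := by omega
        rw [ha, this, maxA, show maxB 0 = Finsupp.single 0 1 from rfl,
          ← Finsupp.single_add]
    · intro a hCG hsup hcl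
      obtain ⟨ha, hv⟩ := base a (fun i hi => hsup i (by omega))
      have h1 : a 0 ≤ 1 := by
        by_contra h
        have h2 : a 0 = 2 := by have := hCG.1 0; omega
        obtain ⟨k, _, hk1, hk2, _⟩ := hcl 0 (by omega) h2
        omega
      have hf : Nat.fib (2*0+3) = 2 := by decide
      constructor
      · rw [hv]; omega
      · intro he
        rw [hv] at he
        have : a 0 = 1 := by omega
        rw [ha, this, show maxB 0 = Finsupp.single 0 1 from rfl]
  | succ m ih =>
    -- common setup
    have setup : ∀ a : ℕ →₀ ℕ, IsChungGraham a → (∀ i, 2*(m+1) < i → a i = 0) →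
        IsChungGraham (a.erase (2*m+2)) ∧ (∀ i, 2*m < i → (a.erase (2*m+2)) i = 0) ∧
        fibVal a = fibVal (a.erase (2*m+2)) + a (2*m+2) * Nat.fib (2*m+4) := by
      intro a hCG hsup
      set n := 2*m+2 with hn
      have happ : ∀ i, i ≠ n → (a.erase n) i = a i := fun i h => Finsupp.erase_ne h
      have hCG' : IsChungGraham (a.erase n) := by
        refine ⟨fun i => ?_, fun i hi => ?_, fun i j hi hj hij h2i h2j => ?_⟩
        · by_cases h : i = n
          · subst h; rw [Finsupp.erase_same]; omega
          · rw [happ i h]; exact hCG.1 i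
        · by_cases h : i = n
          · subst h; rw [Finsupp.erase_same]
          · rw [happ i h]; exact hCG.2.1 i hi
        · have hi2 : i ≠ n := fun h => by rw [h, Finsupp.erase_same] at h2i; omega
          have hj2 : j ≠ n := fun h => by rw [h, Finsupp.erase_same] at h2j; omega
          rw [happ i hi2] at h2i; rw [happ j hj2] at h2j
          obtain ⟨k, hke, hk1, hk2, hk0⟩ := hCG.2.2 i j hi hj hij h2i h2j
          refine ⟨k, hke, hk1, hk2, ?_⟩
          by_cases h : k = n
          · rw [h, Finsupp.erase_same]
          · rw [happ k h]; exact hk0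
      have hsup' : ∀ i, 2*m < i → (a.erase n) i = 0 := by
        intro i hi
        by_cases h : i = n
        · rw [h, Finsupp.erase_same]
        · rw [happ i h]
          rcases Nat.lt_or_ge i (2*m+2) with h1 | h1
          · exact hCG.2.1 i (by rw [Nat.odd_iff]; omega)
          · exact hsup i (by omega)
      refine ⟨hCG', hsup', ?_⟩
      conv_lhs => rw [← Finsupp.erase_add_single n a]
      rw [fibVal_add, fibVal_single, show n + 2 = 2*m+4 by omega]
    have efib1 : Nat.fib (2*m+5) = Nat.fib (2*m+3) + Nat.fib (2*m+4) := by
      rw [show 2*m+5 = (2*m+3)+2 by ring, Nat.fib_add_two]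
    have efib2 : Nat.fib (2*m+6) = Nat.fib (2*m+4) + Nat.fib (2*m+5) := by
      rw [show 2*m+6 = (2*m+4)+2 by ring, Nat.fib_add_two]
    have hmono : Nat.fib (2*m+4) < Nat.fib (2*m+5) :=
      Nat.fib_lt_fib_succ (by omega)
    constructor
    · -- P (m+1)
      intro a hCG hsup
      obtain ⟨hCG', hsup', hval⟩ := setup a hCG hsup
      have hc : a (2*m+2) ≤ 2 := hCG.1 _
      rw [show 2*(m+1)+4 = 2*m+6 by ring]
      rcases (by omega : a (2*m+2) = 0 ∨ a (2*m+2) = 1 ∨ a (2*m+2) = 2) with h | h | h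
      · obtain ⟨hb, _⟩ := ih.1 _ hCG' hsup'
        rw [h] at hval
        constructor
        · omega
        · intro he; omega
      · obtain ⟨hb, _⟩ := ih.1 _ hCG' hsup'
        rw [h] at hval
        constructor
        · omega
        · intro he; omega
      · have hcl' : ∀ i, i ≤ 2*m → (a.erase (2*m+2)) i = 2 →
            ∃ k, k % 2 = 0 ∧ i < k ∧ k ≤ 2*m ∧ (a.erase (2*m+2)) k = 0 := by
          intro i hi h2
          have hi2 : i ≠ 2*m+2 := by omega
          rw [Finsupp.erase_ne hi2] at h2
          have hie : i % 2 = 0 := by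
            by_contra hodd
            have := hCG.2.1 i (by rw [Nat.odd_iff]; omega)
            omega
          obtain ⟨k, hke, hk1, hk2, hk0⟩ :=
            hCG.2.2 i (2*m+2) ⟨i/2, by omega⟩ ⟨m+1, by ring⟩ (by omega) h2 h
          obtain ⟨r, hr⟩ := hke
          refine ⟨k, by omega, hk1, by omega, ?_⟩
          rw [Finsupp.erase_ne (by omega)]
          exact hk0
        obtain ⟨hb, heq⟩ := ih.2 _ hCG' hsup' hcl'
        rw [h] at hval
        constructor
        · omega
        · intro he
          have hbe : fibVal (a.erase (2*m+2)) + 1 = Nat.fib (2*m+3) := by omega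
          have := heq hbe
          rw [← Finsupp.erase_add_single (2*m+2) a, this, h, maxA,
            show maxB (m+1) = maxB m + Finsupp.single (2*m+2) 1 from rfl,
            show 2*(m+1) = 2*m+2 by ring, add_assoc, ← Finsupp.single_add]
    · -- Q (m+1)
      intro a hCG hsup hcl
      obtain ⟨hCG', hsup', hval⟩ := setup a hCG hsup
      have hc : a (2*m+2) ≤ 2 := hCG.1 _
      rw [show 2*(m+1)+3 = 2*m+5 by ring]
      rcases (by omega : a (2*m+2) = 0 ∨ a (2*m+2) = 1 ∨ a (2*m+2) = 2) with h | h | h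
      · obtain ⟨hb, _⟩ := ih.1 _ hCG' hsup'
        rw [h] at hval
        constructor
        · omega
        · intro he; omega
      · have hcl' : ∀ i, i ≤ 2*m → (a.erase (2*m+2)) i = 2 →
            ∃ k, k % 2 = 0 ∧ i < k ∧ k ≤ 2*m ∧ (a.erase (2*m+2)) k = 0 := by
          intro i hi h2
          rw [Finsupp.erase_ne (by omega : i ≠ 2*m+2)] at h2
          obtain ⟨k, hke, hk1, hk2, hk0⟩ := hcl i (by omega) h2
          have hk3 : k ≠ 2*m+2 := fun hh => by rw [hh] at hk0; omega
          refine ⟨k, hke, hk1, by omega, ?_⟩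
          rw [Finsupp.erase_ne hk3]; exact hk0
        obtain ⟨hb, heq⟩ := ih.2 _ hCG' hsup' hcl'
        rw [h] at hval
        constructor
        · omega
        · intro he
          have hbe : fibVal (a.erase (2*m+2)) + 1 = Nat.fib (2*m+3) := by omega
          have := heq hbe
          rw [← Finsupp.erase_add_single (2*m+2) a, this, h,
            show maxB (m+1) = maxB m + Finsupp.single (2*m+2) 1 from rfl]
      · exfalso
        obtain ⟨k, hke, hk1, hk2, hk0⟩ := hcl (2*m+2) (by omega) h
        omega

theorem chung_graham_bounded_max (m : ℕ) :
    (∀ a : ℕ →₀ ℕ, IsChungGraham a → (∀ i, 2 * m < i → a i = 0) →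
      fibVal a < Nat.fib (2 * m + 4)) ∧
    (∃! a : ℕ →₀ ℕ, IsChungGraham a ∧ (∀ i, 2 * m < i → a i = 0) ∧
      fibVal a = Nat.fib (2 * m + 4) - 1) := by
  have hA_CG := maxA_CG m
  have hA_supp := maxA_supp m
  have hA_val := maxA_val m
  have hfibpos : 0 < Nat.fib (2*m+4) := Nat.fib_pos.mpr (by omega)
  constructor
  · intro a h1 h2
    have := ((key m).1 a h1 h2).1
    omega
  · refine ⟨maxA m, ⟨hA_CG, hA_supp, by omega⟩, ?_⟩
    rintro a ⟨h1, h2, h3⟩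
    exact ((key m).1 a h1 h2).2 (by omega)
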